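/- Let A^{(s)} denote the non-backtracking walk matrices of a graph on n vertices. For s, k ∈ ℕ with s ≥ k, writing s = q·k + r with 0 ≤ r < k, one has tr(A^{(s)}) ≤ √n · ‖A^{(k)}‖₂^q · ‖A^{(r)}‖_F, where ‖·‖₂ is the spectral norm and ‖·‖_F the Frobenius norm. -/

import Mathlib

open Matrix

/-- The matrix counting non-backtracking walks of length `s` between pairs of vertices. -/
noncomputable def nbMatrix {n : ℕ} (G : SimpleGraph (Fin n)) (s : ℕ) :
    Matrix (Fin n) (Fin n) ℝ := fun u v =>
  (Set.ncard {w : G.Walk u v |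
      w.length = s ∧ List.Chain' (fun d e => e ≠ d.symm) w.darts} : ℝ)

/-- The spectral norm (ℓ2 → ℓ2 operator norm) of a real square matrix. -/
noncomputable def specNorm {m : Type*} [Fintype m] [DecidableEq m] (M : Matrix m m ℝ) : ℝ :=
  ‖LinearMap.toContinuousLinearMap (Matrix.toEuclideanLin M)‖

/-- The Frobenius norm of a real square matrix. -/
noncomputable def frobNorm {m : Type*} [Fintype m] (M : Matrix m m ℝ) : ℝ :=
  Real.sqrt (∑ i, ∑ j, (M i j) ^ 2)

namespace NBWalkAux

open SimpleGraph Walk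

variable {V : Type*} {G : SimpleGraph V}

/-- The walk consisting of the first `n` darts of a walk. -/
def wtake {u v : V} : (p : G.Walk u v) → (n : ℕ) → G.Walk u (p.getVert n)
  | .nil, _ => .nil
  | p, 0 => Walk.nil.copy rfl (Walk.getVert_zero p).symm
  | .cons h q, (n + 1) =>
      (Walk.cons h (wtake q n)).copy rfl (Walk.getVert_cons_succ _ h).symm

lemma wtake_append_drop {u v : V} (p : G.Walk u v) (n : ℕ) :
    (wtake p n).append (p.drop n) = p := by
  induction p generalizing n with
  | nil => cases n <;> rfl
  | cons h q ih =>
    cases n with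
    | zero =>
      show ((Walk.nil.copy rfl (Walk.getVert_zero (Walk.cons h q)).symm).append
          ((Walk.cons h q).copy (Walk.getVert_zero (Walk.cons h q)).symm rfl)) = Walk.cons h q
      rw [Walk.append_copy_copy, Walk.nil_append, Walk.copy_rfl_rfl]
    | succ n =>
      show ((Walk.cons h (wtake q n)).append (q.drop n)) = _
      rw [Walk.cons_append, ih]

lemma length_wtake {u v : V} (p : G.Walk u v) {n : ℕ} (hn : n ≤ p.length) :
    (wtake p n).length = n := by
  induction p generalizing n with
  | nil => simp at hn; subst hn; rfl
  | cons h q ih =>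
    cases n with
    | zero => rfl
    | succ n =>
      show ((Walk.cons h (wtake q n)).copy rfl _).length = n + 1
      rw [Walk.length_copy, Walk.length_cons, ih (by simpa using hn)]

lemma length_drop {u v : V} (p : G.Walk u v) (n : ℕ) :
    (p.drop n).length = p.length - n := by
  induction p generalizing n with
  | nil =>
    cases n with
    | zero => rfl
    | succ n => exact (Nat.zero_sub (n + 1)).symm
  | cons h q ih =>
    cases n with
    | zero => show (Walk.copy _ _ rfl).length = _; rw [Walk.length_copy]; simp
    | succ n =>
      show (q.drop n).length = _
      rw [ih]
      simp

lemma eq_of_parts {u v : V} {p p' : G.Walk u v} {a : ℕ}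
    (h1 : p.getVert a = p'.getVert a)
    (h2 : HEq (wtake p a) (wtake p' a)) (h3 : HEq (p.drop a) (p'.drop a)) : p = p' := by
  rw [← wtake_append_drop p a, ← wtake_append_drop p' a]
  congr 1

end NBWalkAux

open NBWalkAux SimpleGraph

/-- The set of non-backtracking walks of length `s` from `u` to `v`. -/
def NBset {n : ℕ} (G : SimpleGraph (Fin n)) (s : ℕ) (u v : Fin n) : Set (G.Walk u v) :=
  {w : G.Walk u v | w.length = s ∧ List.Chain' (fun d e => e ≠ d.symm) w.darts}

lemma NBset_finite {n : ℕ} (G : SimpleGraph (Fin n)) (s : ℕ) (u v : Fin n) :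
    (NBset G s u v).Finite := by
  classical
  haveI : G.LocallyFinite := fun v => (Set.toFinite _).fintype
  exact (Set.toFinite {p : G.Walk u v | p.length = s}).subset fun w hw => hw.1

lemma nbMatrix_eq {n : ℕ} (G : SimpleGraph (Fin n)) (s : ℕ) (u v : Fin n) :
    nbMatrix G s u v = ((NBset G s u v).ncard : ℝ) := rfl

/-- The key combinatorial counting bound: splitting a non-backtracking walk of length
`a + b` at its `a`-th vertex. -/
lemma NBset_ncard_le {n : ℕ} (G : SimpleGraph (Fin n)) (a b : ℕ) (u v : Fin n) :
    (NBset G (a + b) u v).ncard ≤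
      ∑ w : Fin n, (NBset G a u w).ncard * (NBset G b w v).ncard := by
  classical
  set F := (NBset_finite G (a + b) u v).toFinset with hF
  rw [Set.ncard_eq_toFinset_card _ (NBset_finite G (a + b) u v)]
  have hcard : F.card = ∑ w : Fin n, (F.filter fun p => p.getVert a = w).card :=
    Finset.card_eq_sum_card_fiberwise (fun p _ => Finset.mem_univ _)
  rw [← hF, hcard]
  apply Finset.sum_le_sum
  intro w _
  rw [Set.ncard_eq_toFinset_card _ (NBset_finite G a u w),
    Set.ncard_eq_toFinset_card _ (NBset_finite G b w v)]
  -- target finset: embedded product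
  set e : G.Walk u w × G.Walk w v ↪ (Σ x : Fin n, G.Walk u x) × (Σ x : Fin n, G.Walk x v) :=
    ⟨fun pq => (⟨w, pq.1⟩, ⟨w, pq.2⟩), by
      rintro ⟨p1, p2⟩ ⟨q1, q2⟩ h
      simp only [Prod.mk.injEq, Sigma.mk.inj_iff, heq_eq_eq, true_and] at h
      simp [h.1, h.2]⟩ with he
  have hrw : ((NBset_finite G a u w).toFinset.card) * ((NBset_finite G b w v).toFinset.card)
      = ((((NBset_finite G a u w).toFinset ×ˢ (NBset_finite G b w v).toFinset)).map e).card := by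
    rw [Finset.card_map, Finset.card_product]
  rw [hrw]
  apply Finset.card_le_card_of_injOn
    (fun p => (⟨p.getVert a, wtake p a⟩, ⟨p.getVert a, p.drop a⟩))
  · intro p hp
    simp only [Finset.mem_coe, Finset.mem_filter] at hp ⊢
    obtain ⟨hpF, hw⟩ := hp
    rw [hF, Set.Finite.mem_toFinset] at hpF
    obtain ⟨hlen, hchain⟩ := hpF
    have hdarts : (wtake p a).darts ++ (p.drop a).darts = p.darts := by
      rw [← Walk.darts_append, wtake_append_drop]
    subst hw
    rw [Finset.mem_map]
    refine ⟨(wtake p a, p.drop a), ?_, rfl⟩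
    rw [Finset.mem_product, Set.Finite.mem_toFinset, Set.Finite.mem_toFinset]
    constructor
    · constructor
      · exact length_wtake p (by omega)
      · exact hchain.prefix ⟨_, hdarts⟩
    · constructor
      · rw [length_drop, hlen]; omega
      · exact hchain.suffix ⟨_, hdarts⟩
  · intro p hp q hq hpq
    simp only [Prod.mk.injEq, Sigma.mk.inj_iff] at hpq
    exact eq_of_parts hpq.1.1 hpq.1.2 hpq.2.2

lemma nbMatrix_nonneg {n : ℕ} (G : SimpleGraph (Fin n)) (s : ℕ) (u v : Fin n) :
    0 ≤ nbMatrix G s u v := by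
  rw [nbMatrix_eq]; positivity

lemma nbMatrix_add_le {n : ℕ} (G : SimpleGraph (Fin n)) (a b : ℕ) (u v : Fin n) :
    nbMatrix G (a + b) u v ≤ ∑ w : Fin n, nbMatrix G a u w * nbMatrix G b w v := by
  simp only [nbMatrix_eq]
  exact_mod_cast Nat.cast_le.mpr (NBset_ncard_le G a b u v)

lemma nbMatrix_le_pow_mul {n : ℕ} (G : SimpleGraph (Fin n)) (k r : ℕ) (q : ℕ) :
    ∀ u v : Fin n, nbMatrix G (q * k + r) u v ≤
      ((nbMatrix G k) ^ q * nbMatrix G r) u v := by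
  induction q with
  | zero => intro u v; simp [Matrix.one_mul]
  | succ q ih =>
    intro u v
    have hs : (q + 1) * k + r = k + (q * k + r) := by ring
    rw [hs]
    calc nbMatrix G (k + (q * k + r)) u v
        ≤ ∑ w : Fin n, nbMatrix G k u w * nbMatrix G (q * k + r) w v :=
          nbMatrix_add_le G k (q * k + r) u v
      _ ≤ ∑ w : Fin n, nbMatrix G k u w * (((nbMatrix G k) ^ q * nbMatrix G r) w v) := by
          apply Finset.sum_le_sum
          intro w _
          exact mul_le_mul_of_nonneg_left (ih w v) (nbMatrix_nonneg G k u w)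
      _ = ((nbMatrix G k) * ((nbMatrix G k) ^ q * nbMatrix G r)) u v := by
          rw [Matrix.mul_apply]
      _ = ((nbMatrix G k) ^ (q + 1) * nbMatrix G r) u v := by
          rw [pow_succ', Matrix.mul_assoc]

lemma trace_le_sqrt_card_mul_frobNorm {m : Type*} [Fintype m] (M : Matrix m m ℝ) :
    M.trace ≤ Real.sqrt (Fintype.card m) * frobNorm M := by
  have h1 : M.trace = ∑ i, M i i := rfl
  have h2 : ∑ i, M i i ≤ |∑ i, M i i| := le_abs_self _
  have h3 : |∑ i, M i i| = Real.sqrt ((∑ i, M i i) ^ 2) := (Real.sqrt_sq_eq_abs _).symm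
  have h4 : ((∑ i, M i i) ^ 2 : ℝ) ≤ (Fintype.card m : ℝ) * ∑ i, (M i i) ^ 2 := by
    have h := sq_sum_le_card_mul_sum_sq (s := (Finset.univ : Finset m))
      (f := fun i => M i i)
    rwa [Finset.card_univ] at h
  have h5 : ∑ i, (M i i) ^ 2 ≤ ∑ i, ∑ j, (M i j) ^ 2 := by
    apply Finset.sum_le_sum
    intro i _
    exact Finset.single_le_sum (f := fun j => (M i j) ^ 2) (fun j _ => sq_nonneg _)
      (Finset.mem_univ i)
  calc M.trace ≤ Real.sqrt ((∑ i, M i i) ^ 2) := by rw [← h3, h1]; exact h2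
    _ ≤ Real.sqrt ((Fintype.card m : ℝ) * ∑ i, ∑ j, (M i j) ^ 2) := by
        apply Real.sqrt_le_sqrt
        calc ((∑ i, M i i) ^ 2 : ℝ) ≤ (Fintype.card m : ℝ) * ∑ i, (M i i) ^ 2 := h4
          _ ≤ (Fintype.card m : ℝ) * ∑ i, ∑ j, (M i j) ^ 2 := by
              apply mul_le_mul_of_nonneg_left h5 (by positivity)
    _ = Real.sqrt (Fintype.card m) * frobNorm M := by
        rw [frobNorm, ← Real.sqrt_mul (by positivity)]

lemma frobNorm_nonneg {m : Type*} [Fintype m] (M : Matrix m m ℝ) : 0 ≤ frobNorm M :=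
  Real.sqrt_nonneg _

lemma specNorm_nonneg {m : Type*} [Fintype m] [DecidableEq m] (M : Matrix m m ℝ) :
    0 ≤ specNorm M := norm_nonneg _

lemma frobNorm_mul_le {m : Type*} [Fintype m] [DecidableEq m] (M N : Matrix m m ℝ) :
    frobNorm (M * N) ≤ specNorm M * frobNorm N := by
  have key : ∀ j, ∑ i, ((M * N) i j) ^ 2 ≤ specNorm M ^ 2 * ∑ i, (N i j) ^ 2 := by
    intro j
    set x : EuclideanSpace ℝ m := (WithLp.equiv 2 (m → ℝ)).symm (fun i => N i j) with hx
    have hxnorm : ‖x‖ ^ 2 = ∑ i, (N i j) ^ 2 := by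
      rw [EuclideanSpace.norm_eq, Real.sq_sqrt (by positivity)]
      simp [hx, sq_abs]
    have hMx : Matrix.toEuclideanLin M x
        = (WithLp.equiv 2 (m → ℝ)).symm (M *ᵥ fun i => N i j) := by
      rw [hx]; rfl
    have hsum : ∑ i, ((M * N) i j) ^ 2 = ‖Matrix.toEuclideanLin M x‖ ^ 2 := by
      rw [hMx, EuclideanSpace.norm_eq, Real.sq_sqrt (by positivity)]
      apply Finset.sum_congr rfl
      intro i _
      have hco : ((WithLp.equiv 2 (m → ℝ)).symm (M *ᵥ fun k => N k j)) i = (M * N) i j := by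
        simp [Matrix.mul_apply, Matrix.mulVec, dotProduct]
      rw [hco, Real.norm_eq_abs, sq_abs]
    have hop : ‖Matrix.toEuclideanLin M x‖ ≤ specNorm M * ‖x‖ :=
      (LinearMap.toContinuousLinearMap (Matrix.toEuclideanLin M)).le_opNorm x
    calc ∑ i, ((M * N) i j) ^ 2 = ‖Matrix.toEuclideanLin M x‖ ^ 2 := hsum
      _ ≤ (specNorm M * ‖x‖) ^ 2 := by
          apply pow_le_pow_left₀ (norm_nonneg _) hop
      _ = specNorm M ^ 2 * ∑ i, (N i j) ^ 2 := by rw [mul_pow, hxnorm]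
  have h1 : frobNorm (M * N) = Real.sqrt (∑ j, ∑ i, ((M * N) i j) ^ 2) := by
    rw [frobNorm, Finset.sum_comm]
  have h2 : frobNorm N = Real.sqrt (∑ j, ∑ i, (N i j) ^ 2) := by
    rw [frobNorm, Finset.sum_comm]
  rw [h1, h2]
  calc Real.sqrt (∑ j, ∑ i, ((M * N) i j) ^ 2)
      ≤ Real.sqrt (specNorm M ^ 2 * ∑ j, ∑ i, (N i j) ^ 2) := by
        apply Real.sqrt_le_sqrt
        rw [Finset.mul_sum]
        exact Finset.sum_le_sum fun j _ => key j
    _ = specNorm M * Real.sqrt (∑ j, ∑ i, (N i j) ^ 2) := by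
        rw [Real.sqrt_mul (sq_nonneg _), Real.sqrt_sq (specNorm_nonneg M)]

lemma frobNorm_pow_mul_le {m : Type*} [Fintype m] [DecidableEq m]
    (M N : Matrix m m ℝ) (q : ℕ) :
    frobNorm (M ^ q * N) ≤ specNorm M ^ q * frobNorm N := by
  induction q with
  | zero => simp [Matrix.one_mul]
  | succ q ih =>
    rw [pow_succ', Matrix.mul_assoc]
    calc frobNorm (M * (M ^ q * N)) ≤ specNorm M * frobNorm (M ^ q * N) :=
          frobNorm_mul_le M _
      _ ≤ specNorm M * (specNorm M ^ q * frobNorm N) :=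
          mul_le_mul_of_nonneg_left ih (specNorm_nonneg M)
      _ = specNorm M ^ (q + 1) * frobNorm N := by rw [pow_succ', mul_assoc]

/-- For `s = q·k + r` with `0 ≤ r < k`,
`tr(A^{(s)}) ≤ √n · ‖A^{(k)}‖₂^q · ‖A^{(r)}‖_F`. -/
theorem nbMatrix_trace_bound (n : ℕ) (G : SimpleGraph (Fin n))
    (s k q r : ℕ) (hks : k ≤ s) (hs : s = q * k + r) (hr : r < k) :
    (nbMatrix G s).trace ≤
      Real.sqrt n * (specNorm (nbMatrix G k)) ^ q * frobNorm (nbMatrix G r) := by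
  subst hs
  set B := (nbMatrix G k) ^ q * nbMatrix G r with hB
  have h1 : (nbMatrix G (q * k + r)).trace ≤ B.trace := by
    have : (nbMatrix G (q * k + r)).trace = ∑ i, nbMatrix G (q * k + r) i i := rfl
    rw [this]
    have : B.trace = ∑ i, B i i := rfl
    rw [this]
    exact Finset.sum_le_sum fun i _ => nbMatrix_le_pow_mul G k r q i i
  have h2 : B.trace ≤ Real.sqrt n * frobNorm B := by
    have := trace_le_sqrt_card_mul_frobNorm B
    simpa [Fintype.card_fin] using this
  have h3 : frobNorm B ≤ specNorm (nbMatrix G k) ^ q * frobNorm (nbMatrix G r) :=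
    frobNorm_pow_mul_le _ _ q
  calc (nbMatrix G (q * k + r)).trace ≤ B.trace := h1
    _ ≤ Real.sqrt n * frobNorm B := h2
    _ ≤ Real.sqrt n * (specNorm (nbMatrix G k) ^ q * frobNorm (nbMatrix G r)) :=
        mul_le_mul_of_nonneg_left h3 (Real.sqrt_nonneg _)
    _ = Real.sqrt n * (specNorm (nbMatrix G k)) ^ q * frobNorm (nbMatrix G r) := by
        rw [mul_assoc]
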